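/- Suppose a sequence of Feasibility Pump iterates cycles: for i = 1,…,k−1 we have vertices x̄ⁱ of a polytope P ⊆ [0,1]^n with x̃ⁱ = round(x̄ⁱ), x̄^{i+1} = argmin_{x ∈ P} ‖x̃ⁱ − x‖₁, and x̄¹ = x̄ᵏ, x̃¹ = x̃ᵏ with k ≥ 3 and x̃¹,…,x̃^{k−1} pairwise distinct. Then, assuming the tie value 1/2 is always rounded up to 1, such a cycle of length ≥ 3 cannot occur; equivalently, stalling always occurs with cycles of length two. -/
import Mathlib

/-- Rounding to the nearest 0/1 point (ties up) minimizes the distance, strictly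
so in the case `b = 1`, `r = 0`. -/
lemma round_le_aux (t b r : ℝ) (ht0 : 0 ≤ t) (ht1 : t ≤ 1)
    (hb : b = 0 ∨ b = 1) (hr : r = ((⌊t + 1/2⌋ : ℤ) : ℝ)) :
    |r - t| ≤ |b - t| ∧ (b = 1 → r = 0 → |r - t| < |b - t|) := by
  have h0 : |(0:ℝ) - t| = t := by
    rw [abs_of_nonpos (by linarith)]; ring
  have h1 : |(1:ℝ) - t| = 1 - t := by
    rw [abs_of_nonneg (by linarith)]
  have hcase : (r = 0 ∧ t < 1/2) ∨ (r = 1 ∧ 1/2 ≤ t) := by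
    rcases lt_or_ge t (1/2) with h | h
    · left
      have : ⌊t + 1/2⌋ = 0 := by
        rw [Int.floor_eq_zero_iff]
        constructor <;> simp <;> linarith
      refine ⟨?_, h⟩
      rw [hr, this]; simp
    · right
      have : ⌊t + 1/2⌋ = 1 := by
        rw [Int.floor_eq_iff]
        constructor <;> push_cast <;> linarith
      refine ⟨?_, h⟩
      rw [hr, this]; simp
  rcases hcase with ⟨hr0, ht⟩ | ⟨hr1, ht⟩
  · subst hr0
    rcases hb with hb | hb <;> subst hb
    · exact ⟨le_refl _, by intro h; norm_num at h⟩
    · rw [h0, h1]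
      exact ⟨by linarith, fun _ _ => by linarith⟩
  · subst hr1
    rcases hb with hb | hb <;> subst hb
    · rw [h0, h1]
      exact ⟨by linarith, by intro h; norm_num at h⟩
    · exact ⟨le_refl _, by intro _ h; norm_num at h⟩

/-- Componentwise equality from componentwise inequality plus reversed sum
inequality. -/
lemma comp_eq {n : ℕ} (f g : Fin n → ℝ) (hle : ∀ j, f j ≤ g j)
    (h : ∑ j, g j ≤ ∑ j, f j) : ∀ j, f j = g j := by
  have h0 : ∑ j, (g j - f j) = 0 := by
    have h1 : ∑ j, (g j - f j) = (∑ j, g j) - ∑ j, f j := by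
      rw [Finset.sum_sub_distrib]
    have h2 : (0:ℝ) ≤ ∑ j, (g j - f j) :=
      Finset.sum_nonneg (fun j _ => sub_nonneg.mpr (hle j))
    linarith
  intro j
  have := (Finset.sum_eq_zero_iff_of_nonneg
    (fun j _ => sub_nonneg.mpr (hle j))).mp h0 j (Finset.mem_univ j)
  linarith

/-- With consistent rounding (ties rounded up to 1), the Feasibility Pump
iterates cannot form a cycle of length at least 3: stalling always occurs with
cycles of length two. -/
theorem no_long_cycles (n k : ℕ) (hk : 3 ≤ k) (P : Set (Fin n → ℝ))
    (hP01 : ∀ x ∈ P, ∀ i, 0 ≤ x i ∧ x i ≤ 1)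
    (xb xt : ℕ → Fin n → ℝ)
    (hvert : ∀ i, 1 ≤ i → i ≤ k → xb i ∈ Set.extremePoints ℝ P)
    (hbin : ∀ i, 1 ≤ i → i ≤ k → ∀ j, xt i j = 0 ∨ xt i j = 1)
    (hround : ∀ i, 1 ≤ i → i ≤ k → ∀ j, xt i j = ((⌊xb i j + 1/2⌋ : ℤ) : ℝ))
    (hproj : ∀ i, 1 ≤ i → i ≤ k - 1 →
      ∀ x ∈ P, ∑ j, |xt i j - xb (i+1) j| ≤ ∑ j, |xt i j - x j|)
    (hcyc1 : xb 1 = xb k) (hcyc2 : xt 1 = xt k)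
    (hdistinct : ∀ i i', 1 ≤ i → i < i' → i' ≤ k - 1 → xt i ≠ xt i') :
    False := by
  have hmem : ∀ i, 1 ≤ i → i ≤ k → xb i ∈ P := fun i h1 h2 => (hvert i h1 h2).1
  set d : ℕ → ℝ := fun i => ∑ j, |xt i j - xb i j| with hd
  -- the two key inequalities of one iteration
  have key : ∀ i, 1 ≤ i → i ≤ k - 1 →
      d (i+1) ≤ ∑ j, |xt i j - xb (i+1) j| ∧
        (∑ j, |xt i j - xb (i+1) j|) ≤ d i := by
    intro i h1 h2
    have hi1 : 1 ≤ i + 1 := by omega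
    have hi1k : i + 1 ≤ k := by omega
    constructor
    · apply Finset.sum_le_sum
      intro j _
      exact (round_le_aux (xb (i+1) j) (xt i j) (xt (i+1) j)
        (hP01 _ (hmem (i+1) hi1 hi1k) j).1 (hP01 _ (hmem (i+1) hi1 hi1k) j).2
        (hbin i h1 (by omega) j) (hround (i+1) hi1 hi1k j)).1
    · exact hproj i h1 h2 (xb i) (hmem i h1 (by omega))
  have step : ∀ i, 1 ≤ i → i ≤ k - 1 → d (i+1) ≤ d i := by
    intro i h1 h2
    obtain ⟨hA, hB⟩ := key i h1 h2
    linarith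
  -- d is antitone along the whole range
  have mono : ∀ i j, 1 ≤ i → i ≤ j → j ≤ k → d j ≤ d i := by
    intro i j h1 hij hjk
    induction j, hij using Nat.le_induction with
    | base => exact le_refl _
    | succ m hm ih =>
      have h := step m (by omega) (by omega)
      have := ih (by omega)
      linarith
  have hdk : d k = d 1 := by
    simp only [hd]
    rw [← hcyc1, ← hcyc2]
  have deq : ∀ i, 1 ≤ i → i ≤ k - 1 → d (i+1) = d i := by
    intro i h1 h2
    have h3 := mono 1 i le_rfl h1 (by omega)
    have h4 := mono (i+1) k (by omega) (by omega) le_rfl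
    have h5 := step i h1 h2
    linarith
  -- componentwise monotonicity of the rounded points
  have hle_comp : ∀ i, 1 ≤ i → i ≤ k - 1 → ∀ j, xt i j ≤ xt (i+1) j := by
    intro i h1 h2 j
    obtain ⟨hA, hB⟩ := key i h1 h2
    have hi1 : 1 ≤ i + 1 := by omega
    have hi1k : i + 1 ≤ k := by omega
    have hround' : ∀ j', |xt (i+1) j' - xb (i+1) j'| ≤ |xt i j' - xb (i+1) j'| :=
      fun j' => (round_le_aux (xb (i+1) j') (xt i j') (xt (i+1) j')
        (hP01 _ (hmem (i+1) hi1 hi1k) j').1 (hP01 _ (hmem (i+1) hi1 hi1k) j').2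
        (hbin i h1 (by omega) j') (hround (i+1) hi1 hi1k j')).1
    have heq := deq i h1 h2
    have hcomp : ∀ j', |xt (i+1) j' - xb (i+1) j'| = |xt i j' - xb (i+1) j'| := by
      apply comp_eq _ _ hround'
      have : d (i+1) = ∑ j, |xt (i+1) j - xb (i+1) j| := rfl
      linarith
    by_contra hlt
    -- then xt i j = 1 and xt (i+1) j = 0
    have hb1 : xt i j = 1 := by
      rcases hbin i h1 (by omega) j with h | h
      · rcases hbin (i+1) hi1 hi1k j with h' | h' <;> rw [h, h'] at hlt <;>
          norm_num at hlt
      · exact h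
    have hb0 : xt (i+1) j = 0 := by
      rcases hbin (i+1) hi1 hi1k j with h' | h'
      · exact h'
      · rw [hb1, h'] at hlt; norm_num at hlt
    have hstrict := (round_le_aux (xb (i+1) j) (xt i j) (xt (i+1) j)
      (hP01 _ (hmem (i+1) hi1 hi1k) j).1 (hP01 _ (hmem (i+1) hi1 hi1k) j).2
      (hbin i h1 (by omega) j) (hround (i+1) hi1 hi1k j)).2 hb1 hb0
    have := hcomp j
    linarith
  -- sums of the rounded points
  set s : ℕ → ℝ := fun i => ∑ j, xt i j with hs
  have smono : ∀ i j, 1 ≤ i → i ≤ j → j ≤ k - 1 + 1 → s i ≤ s j := by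
    intro i j h1 hij hjk
    induction j, hij using Nat.le_induction with
    | base => exact le_refl _
    | succ m hm ih =>
      have h : s m ≤ s (m+1) :=
        Finset.sum_le_sum (fun j _ => hle_comp m (by omega) (by omega) j)
      have := ih (by omega)
      linarith
  have hsk : s k = s 1 := by
    simp only [hs]
    rw [← hcyc2]
  have hs12 : s 1 = s 2 := by
    have h1 := smono 1 2 le_rfl (by omega) (by omega)
    have h2 := smono 2 k (by omega) (by omega) (by omega)
    linarith
  have hxt12 : xt 1 = xt 2 := by
    funext j
    exact comp_eq _ _ (fun j => hle_comp 1 le_rfl (by omega) j) (by linarith) j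
  exact hdistinct 1 2 le_rfl (by omega) (by omega) hxt12
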